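/- For a simple random walk on a finite connected graph G with m edges, the maximum hitting time H(G) satisfies H(G) ≤ m^2, with equality if and only if G is the path graph P_m. -/

import Mathlib

/-- `IsHittingTime G a H` : `H` satisfies the linear system characterizing the expected
hitting times of the absorbing vertex `a` for the simple random walk on `G`. -/
def IsHittingTime {V : Type*} [Fintype V] (G : SimpleGraph V) [DecidableRel G.Adj]
    (a : V) (H : V → ℝ) : Prop :=
  H a = 0 ∧ ∀ x, x ≠ a →
    (G.degree x : ℝ) * H x = (G.degree x : ℝ) + ∑ y ∈ G.neighborFinset x, H y

open Finset

section Aux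
variable {V : Type*} [Fintype V] [DecidableEq V] (G : SimpleGraph V) [DecidableRel G.Adj]

def adjP : Finset (V × V) := Finset.univ.filter fun p => G.Adj p.1 p.2
def cutP (B : Finset V) : Finset (V × V) := (adjP G).filter fun p => p.1 ∈ B ∧ p.2 ∉ B
def inP (B : Finset V) : Finset (V × V) := (adjP G).filter fun p => p.1 ∈ B ∧ p.2 ∈ B
def fromP (B : Finset V) : Finset (V × V) := (adjP G).filter fun p => p.1 ∈ B

lemma fromP_sum (f : V → ℝ) (B : Finset V) :
    ∑ p ∈ fromP G B, (f p.1 - f p.2) = ∑ u ∈ B, ∑ v ∈ G.neighborFinset u, (f u - f v) := by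
  classical
  rw [fromP, adjP, Finset.filter_filter, Finset.sum_filter, Fintype.sum_prod_type]
  have h : ∀ u : V, (∑ v : V, if G.Adj u v ∧ u ∈ B then f u - f v else 0)
      = if u ∈ B then ∑ v ∈ G.neighborFinset u, (f u - f v) else 0 := by
    intro u
    by_cases hu : u ∈ B
    · simp only [hu, and_true, if_true]
      rw [SimpleGraph.neighborFinset_eq_filter, Finset.sum_filter]
    · simp [hu]
  rw [Finset.sum_congr rfl fun u _ => h u]
  simp [Finset.sum_ite_mem]

lemma inP_sum_zero (f : V → ℝ) (B : Finset V) :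
    ∑ p ∈ inP G B, (f p.1 - f p.2) = 0 := by
  classical
  have hswap : ∀ p ∈ inP G B, Prod.swap p ∈ inP G B := by
    intro p hp
    simp only [inP, adjP, Finset.mem_filter, Finset.mem_univ, true_and] at hp ⊢
    exact ⟨hp.1.symm, hp.2.2, hp.2.1⟩
  have h2 : ∑ p ∈ inP G B, (f p.1 - f p.2) = ∑ p ∈ inP G B, (f p.2 - f p.1) :=
    Finset.sum_nbij' (i := Prod.swap) (j := Prod.swap) hswap hswap
      (fun p _ => Prod.swap_swap p) (fun p _ => Prod.swap_swap p)
      (fun p _ => rfl)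
  have h3 : ∑ p ∈ inP G B, (f p.2 - f p.1) = - ∑ p ∈ inP G B, (f p.1 - f p.2) := by
    rw [← Finset.sum_neg_distrib]
    exact Finset.sum_congr rfl fun p _ => by ring
  linarith [h2, h3]

lemma fromP_sum_split (f : V → ℝ) (B : Finset V) :
    ∑ p ∈ fromP G B, (f p.1 - f p.2)
      = ∑ p ∈ inP G B, (f p.1 - f p.2) + ∑ p ∈ cutP G B, (f p.1 - f p.2) := by
  classical
  rw [inP, cutP, ← Finset.filter_filter (fun p : V × V => p.1 ∈ B) (fun p => p.2 ∈ B),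
      ← Finset.filter_filter (fun p : V × V => p.1 ∈ B) (fun p => p.2 ∉ B)]
  exact (Finset.sum_filter_add_sum_filter_not _ _ _).symm

lemma divergence (a : V) (f : V → ℝ) (hf : IsHittingTime G a f) (B : Finset V) (haB : a ∉ B) :
    ∑ p ∈ cutP G B, (f p.1 - f p.2) = ∑ u ∈ B, (G.degree u : ℝ) := by
  classical
  have h1 : ∀ u ∈ B, ∑ v ∈ G.neighborFinset u, (f u - f v) = (G.degree u : ℝ) := by
    intro u hu
    have hne : u ≠ a := fun h => haB (h ▸ hu)
    have := hf.2 u hne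
    rw [Finset.sum_sub_distrib, Finset.sum_const, SimpleGraph.degree] at *
    push_cast
    rw [nsmul_eq_mul]
    push_cast at this
    linarith
  have := fromP_sum_split G f B
  rw [fromP_sum, inP_sum_zero, Finset.sum_congr rfl h1] at this
  linarith [this]

def touchP (A : Finset V) : Finset (V × V) := (adjP G).filter fun p => p.1 ∈ A ∨ p.2 ∈ A

lemma touch_card (hconn : G.Connected) :
    ∀ (A : Finset V), A ≠ Finset.univ → 2 * A.card ≤ (touchP G A).card := by
  intro A
  induction A using Finset.strongInduction with
  | _ A ih =>
    intro hA
    rcases A.eq_empty_or_nonempty with h | ⟨u, hu⟩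
    · simp [h]
    · obtain ⟨w, hw⟩ : ∃ w, w ∉ A := by
        by_contra h
        push_neg at h
        exact hA (Finset.eq_univ_iff_forall.2 h)
      obtain ⟨p⟩ := hconn.preconnected u w
      obtain ⟨d, _, hd1, hd2⟩ := p.exists_boundary_dart (A : Set V) hu hw
      rw [Finset.mem_coe] at hd1 hd2
      set A' := A.erase d.fst with hA'def
      have hss : A' ⊂ A := Finset.erase_ssubset hd1
      have hA'ne : A' ≠ Finset.univ := by
        intro h
        have : d.fst ∈ A' := h ▸ Finset.mem_univ d.fst
        exact (Finset.notMem_erase _ _) this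
      have ihA := ih A' hss hA'ne
      have hfst_ne : d.fst ∉ A' := Finset.notMem_erase _ _
      have hsnd_ne : d.snd ∉ A' := fun h => hd2 (Finset.mem_of_mem_erase h)
      have hne : d.fst ≠ d.snd := d.adj.ne
      have hmem1 : (d.fst, d.snd) ∉ touchP G A' := by
        simp only [touchP, adjP, Finset.mem_filter]
        rintro ⟨-, h | h⟩
        · exact hfst_ne h
        · exact hsnd_ne h
      have hmem2 : (d.snd, d.fst) ∉ insert (d.fst, d.snd) (touchP G A') := by
        simp only [Finset.mem_insert, touchP, adjP, Finset.mem_filter]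
        rintro (h | ⟨-, h | h⟩)
        · exact hne (congrArg Prod.snd h)
        · exact hsnd_ne h
        · exact hfst_ne h
      have hsub : insert (d.snd, d.fst) (insert (d.fst, d.snd) (touchP G A')) ⊆ touchP G A := by
        intro q hq
        simp only [Finset.mem_insert] at hq
        simp only [touchP, adjP, Finset.filter_filter, Finset.mem_filter, Finset.mem_univ,
          true_and]
        rcases hq with rfl | rfl | hq
        · exact ⟨d.adj.symm, Or.inr hd1⟩
        · exact ⟨d.adj, Or.inl hd1⟩
        · simp only [touchP, adjP, Finset.filter_filter, Finset.mem_filter, Finset.mem_univ,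
            true_and] at hq
          exact ⟨hq.1, hq.2.imp (fun h => Finset.mem_of_mem_erase h)
            (fun h => Finset.mem_of_mem_erase h)⟩
      have hcard : (insert (d.snd, d.fst) (insert (d.fst, d.snd) (touchP G A'))).card
          = (touchP G A').card + 2 := by
        rw [Finset.card_insert_of_notMem hmem2, Finset.card_insert_of_notMem hmem1]
      have hc := Finset.card_le_card hsub
      have hAcard : A'.card + 1 = A.card := Finset.card_erase_add_one hd1
      omega

lemma fromP_card (B : Finset V) : (fromP G B).card = ∑ u ∈ B, G.degree u := by
  classical
  rw [fromP, adjP, Finset.filter_filter, Finset.card_filter, Fintype.sum_prod_type]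
  have h : ∀ u : V, (∑ v : V, if G.Adj u v ∧ u ∈ B then 1 else 0)
      = if u ∈ B then G.degree u else 0 := by
    intro u
    by_cases hu : u ∈ B
    · simp only [hu, and_true, if_true]
      rw [SimpleGraph.degree, SimpleGraph.neighborFinset_eq_filter, Finset.card_filter]
    · simp [hu]
  rw [Finset.sum_congr rfl fun u _ => h u]
  simp [Finset.sum_ite_mem]

lemma inP_card_add_cutP_card (B : Finset V) :
    (inP G B).card + (cutP G B).card = (fromP G B).card := by
  classical
  rw [inP, cutP, fromP]
  rw [← Finset.filter_filter (fun p : V × V => p.1 ∈ B) (fun p => p.2 ∈ B),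
      ← Finset.filter_filter (fun p : V × V => p.1 ∈ B) (fun p => p.2 ∉ B)]
  exact Finset.card_filter_add_card_filter_not _

lemma adjP_card : (adjP G).card = 2 * G.edgeFinset.card := by
  classical
  have h : adjP G = fromP G Finset.univ := by
    simp [adjP, fromP]
  rw [h, fromP_card, SimpleGraph.sum_degrees_eq_twice_card_edges]

/-- The set `B k` of vertices of sorted index `≥ k`. -/
def sortB {n : ℕ} (x : Fin n → V) (k : ℕ) : Finset V :=
  (Finset.univ.filter fun j : Fin n => k ≤ j.val).image x

lemma cut_bound (hconn : G.Connected) (m : ℕ) (hm : m = G.edgeFinset.card)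
    (a : V) (f : V → ℝ) (hf : IsHittingTime G a f)
    {n : ℕ} (x : Fin n → V) (hx : Function.Bijective x)
    (hmono : Monotone (f ∘ x)) (h0 : 0 < n) (hxa : x ⟨0, h0⟩ = a)
    (k : ℕ) (hk1 : 1 ≤ k) (hkn : k < n) :
    (f (x ⟨k, hkn⟩) - f (x ⟨k - 1, Nat.lt_of_le_of_lt (Nat.sub_le k 1) hkn⟩)
        ≤ 2 * ((m : ℝ) - k) + 1) ∧
      k ≤ m ∧
      ((f (x ⟨k, hkn⟩) - f (x ⟨k - 1, Nat.lt_of_le_of_lt (Nat.sub_le k 1) hkn⟩)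
          = 2 * ((m : ℝ) - k) + 1) → Function.Injective (f ∘ x) →
        cutP G (sortB x k)
          = {(x ⟨k, hkn⟩, x ⟨k - 1, Nat.lt_of_le_of_lt (Nat.sub_le k 1) hkn⟩)}) := by
  classical
  set B := sortB x k with hBdef
  set xk := x ⟨k, hkn⟩ with hxk
  set xk1 := x ⟨k - 1, Nat.lt_of_le_of_lt (Nat.sub_le k 1) hkn⟩ with hxk1
  set g := f xk - f xk1 with hgdef
  -- membership characterization
  have hBmem : ∀ j : Fin n, x j ∈ B ↔ k ≤ j.val := by
    intro j
    constructor
    · intro hj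
      obtain ⟨j', hj', hjx⟩ := Finset.mem_image.1 hj
      rw [hx.injective hjx] at hj'
      exact (Finset.mem_filter.1 hj').2
    · intro hj
      exact Finset.mem_image.2 ⟨j, Finset.mem_filter.2 ⟨Finset.mem_univ _, hj⟩, rfl⟩
  have haB : a ∉ B := by
    rw [← hxa, hBmem]
    simp only [Fin.val_mk]
    omega
  -- the complement set A
  set A := (Finset.univ.filter fun j : Fin n => j.val < k).image x with hAdef
  have hAmem : ∀ j : Fin n, x j ∈ A ↔ j.val < k := by
    intro j
    constructor
    · intro hj
      obtain ⟨j', hj', hjx⟩ := Finset.mem_image.1 hj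
      rw [hx.injective hjx] at hj'
      exact (Finset.mem_filter.1 hj').2
    · intro hj
      exact Finset.mem_image.2 ⟨j, Finset.mem_filter.2 ⟨Finset.mem_univ _, hj⟩, rfl⟩
  have hcompl : ∀ v : V, v ∈ A ↔ v ∉ B := by
    intro v
    obtain ⟨j, rfl⟩ := hx.surjective v
    rw [hAmem, hBmem]
    omega
  have hAcard : A.card = k := by
    rw [hAdef, Finset.card_image_of_injective _ hx.injective]
    have : (Finset.univ.filter fun j : Fin n => j.val < k) = Finset.Iio ⟨k, hkn⟩ := by
      ext j
      simp [Fin.lt_def]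
    rw [this, Fin.card_Iio]
  have hAne : A ≠ Finset.univ := by
    intro h
    have hmem : xk ∈ A := h ▸ Finset.mem_univ xk
    rw [hxk, hAmem] at hmem
    simp only [Fin.val_mk] at hmem
    omega
  -- counting
  have htouch : 2 * k ≤ (touchP G A).card := hAcard ▸ touch_card G hconn A hAne
  have hsplit : (inP G B).card + (touchP G A).card = 2 * m := by
    have h2 : inP G B = (adjP G).filter fun p => ¬(p.1 ∈ A ∨ p.2 ∈ A) := by
      ext p
      simp only [inP, Finset.mem_filter]
      rw [hcompl p.1, hcompl p.2]
      tauto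
    have h1 := Finset.card_filter_add_card_filter_not
      (p := fun p : V × V => p.1 ∈ A ∨ p.2 ∈ A) (s := adjP G)
    rw [hm, ← adjP_card, h2, touchP]
    omega
  have hin2k : (inP G B).card + 2 * k ≤ 2 * m := by omega
  have hkm : k ≤ m := by omega
  -- divergence + card identity
  have hdiv : ∑ p ∈ cutP G B, (f p.1 - f p.2) = ∑ u ∈ B, (G.degree u : ℝ) :=
    divergence G a f hf B haB
  have hcards : (∑ u ∈ B, (G.degree u : ℝ))
      = ((inP G B).card : ℝ) + ((cutP G B).card : ℝ) := by
    have h := inP_card_add_cutP_card G B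
    rw [fromP_card] at h
    rw [← Nat.cast_sum, ← h]
    push_cast
    ring
  -- lower bounds on cut terms
  have hterm : ∀ p ∈ cutP G B, g ≤ f p.1 - f p.2 := by
    intro p hp
    rw [cutP, Finset.mem_filter] at hp
    obtain ⟨-, h1, h2⟩ := hp
    obtain ⟨j1, hj1⟩ := hx.surjective p.1
    obtain ⟨j2, hj2⟩ := hx.surjective p.2
    rw [← hj1, hBmem] at h1
    rw [← hj2, hBmem] at h2
    have hf1 : f xk ≤ f (x j1) :=
      hmono (show (⟨k, hkn⟩ : Fin n) ≤ j1 by rw [Fin.le_def]; simpa using h1)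
    have hf2 : f (x j2) ≤ f xk1 :=
      hmono (show j2 ≤ (⟨k - 1, Nat.lt_of_le_of_lt (Nat.sub_le k 1) hkn⟩ : Fin n) by
        rw [Fin.le_def]; simp only [Fin.val_mk]; omega)
    simp only [hgdef]
    rw [← hj1, ← hj2]
    linarith
  -- nonemptiness of the cut
  have hne : (cutP G B).Nonempty := by
    have hxkB : xk ∈ B := by rw [hxk, hBmem]
    obtain ⟨p⟩ := hconn.preconnected xk a
    obtain ⟨d, -, hd1, hd2⟩ := p.exists_boundary_dart (B : Set V) hxkB haB
    exact ⟨(d.fst, d.snd), by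
      simp only [cutP, adjP, Finset.filter_filter, Finset.mem_filter, Finset.mem_univ, true_and]
      exact ⟨d.adj, hd1, hd2⟩⟩
  have hc1 : 1 ≤ (cutP G B).card := Finset.card_pos.2 hne
  have hsum_lb : ((cutP G B).card : ℝ) * g ≤ ∑ p ∈ cutP G B, (f p.1 - f p.2) := by
    have := Finset.card_nsmul_le_sum (cutP G B) (fun p => f p.1 - f p.2) g hterm
    rwa [nsmul_eq_mul] at this
  -- main inequality
  have hIc : ((inP G B).card : ℝ) + 2 * k ≤ 2 * m := by exact_mod_cast hin2k
  have hc1' : (1 : ℝ) ≤ ((cutP G B).card : ℝ) := by exact_mod_cast hc1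
  have hI0 : (0 : ℝ) ≤ ((inP G B).card : ℝ) := by positivity
  have hmain : ((cutP G B).card : ℝ) * g ≤ ((inP G B).card : ℝ) + ((cutP G B).card : ℝ) := by
    rw [← hcards, ← hdiv]; exact hsum_lb
  have hmk : (k : ℝ) ≤ (m : ℝ) := by exact_mod_cast hkm
  have hgb : g ≤ 2 * ((m : ℝ) - k) + 1 := by nlinarith [hmain, hIc, hc1', hI0]
  refine ⟨hgb, hkm, ?_⟩
  -- equality case
  intro heq hinj
  have huniq : ∀ p ∈ cutP G B, p = (xk, xk1) := by
    intro p hp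
    -- sum over erase is at least (c-1) * g
    have herase : ((cutP G B).card - 1 : ℝ) * g
        ≤ ∑ q ∈ (cutP G B).erase p, (f q.1 - f q.2) := by
      have hcad : ((cutP G B).erase p).card = (cutP G B).card - 1 :=
        Finset.card_erase_of_mem hp
      have := Finset.card_nsmul_le_sum ((cutP G B).erase p) (fun q => f q.1 - f q.2) g
        (fun q hq => hterm q (Finset.mem_of_mem_erase hq))
      rw [nsmul_eq_mul, hcad] at this
      rwa [Nat.cast_sub hc1, Nat.cast_one] at this
    have hsum_split : (f p.1 - f p.2) + ∑ q ∈ (cutP G B).erase p, (f q.1 - f q.2)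
        = ∑ p ∈ cutP G B, (f p.1 - f p.2) :=
      Finset.add_sum_erase (cutP G B) (fun q => f q.1 - f q.2) hp
    have htot : ∑ p ∈ cutP G B, (f p.1 - f p.2)
        ≤ ((inP G B).card : ℝ) + ((cutP G B).card : ℝ) := by
      rw [hdiv, hcards]
    have hg1 : (1 : ℝ) ≤ g := by rw [heq]; linarith
    have htp_le : f p.1 - f p.2 ≤ g := by
      nlinarith [hterm p hp, mul_nonneg (sub_nonneg.2 hc1') (sub_nonneg.2 hg1)]
    have htp : f p.1 - f p.2 = g := le_antisymm htp_le (hterm p hp)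
    -- identify endpoints
    rw [cutP, Finset.mem_filter] at hp
    obtain ⟨-, h1, h2⟩ := hp
    obtain ⟨j1, hj1⟩ := hx.surjective p.1
    obtain ⟨j2, hj2⟩ := hx.surjective p.2
    rw [← hj1, hBmem] at h1
    rw [← hj2, hBmem] at h2
    have hf1 : f xk ≤ f (x j1) := hmono (Fin.mk_le_mk.2 h1 : (⟨k, hkn⟩ : Fin n) ≤ j1)
    have hf2 : f (x j2) ≤ f xk1 := hmono (Fin.mk_le_mk.2 (by omega) : j2 ≤ ⟨k - 1, _⟩)
    have he1 : f (x j1) = f xk := by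
      rw [← hj1, ← hj2] at htp
      simp only [hgdef] at htp
      linarith
    have he2 : f (x j2) = f xk1 := by
      rw [← hj1, ← hj2] at htp
      simp only [hgdef] at htp
      linarith
    have hj1' : j1 = ⟨k, hkn⟩ := hinj he1
    have hj2' : j2 = ⟨k - 1, Nat.lt_of_le_of_lt (Nat.sub_le k 1) hkn⟩ := hinj he2
    have : p = (p.1, p.2) := rfl
    rw [this, ← hj1, ← hj2, hj1', hj2']
  obtain ⟨p0, hp0⟩ := hne
  have hp0eq := huniq p0 hp0
  rw [Finset.eq_singleton_iff_unique_mem]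
  exact ⟨hp0eq ▸ hp0, huniq⟩
lemma sortB_mem {n : ℕ} {x : Fin n → V} (hx : Function.Bijective x) (k : ℕ) (j : Fin n) :
    x j ∈ sortB x k ↔ k ≤ j.val := by
  constructor
  · intro hj
    obtain ⟨j', hj', hjx⟩ := Finset.mem_image.1 hj
    rw [hx.injective hjx] at hj'
    exact (Finset.mem_filter.1 hj').2
  · intro hj
    exact Finset.mem_image.2 ⟨j, Finset.mem_filter.2 ⟨Finset.mem_univ _, hj⟩, rfl⟩

lemma master (hconn : G.Connected) (m : ℕ) (hm : m = G.edgeFinset.card)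
    (a : V) (f : V → ℝ) (hf : IsHittingTime G a f) :
    (∀ v, f v ≤ (m : ℝ) ^ 2) ∧
      (∀ v, f v = (m : ℝ) ^ 2 → Nonempty (G ≃g SimpleGraph.pathGraph (m + 1))) := by
  classical
  have hV : Nonempty V := hconn.nonempty
  set n := Fintype.card V with hn
  have h0 : 0 < n := Fintype.card_pos
  set w : Fin n ≃ V := (Fintype.equivFin V).symm with hw
  set σ := Tuple.sort (f ∘ w) with hσ
  set e : Fin n ≃ V := σ.trans w with he
  set x : Fin n → V := fun i => e i with hxdef
  have hx : Function.Bijective x := e.bijective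
  have hmono : Monotone (f ∘ x) := by
    have := Tuple.monotone_sort (f ∘ w)
    exact this
  -- the smallest element is `a`
  have hmin : ∀ j : Fin n, f (x ⟨0, h0⟩) ≤ f (x j) := fun j => hmono (by rw [Fin.le_def]; exact Nat.zero_le _)
  have hxa : x ⟨0, h0⟩ = a := by
    by_contra hne
    set u := x ⟨0, h0⟩ with hu
    have hdeg : 0 < G.degree u := by
      rw [SimpleGraph.degree_pos_iff_exists_adj]
      obtain ⟨p⟩ := hconn.preconnected u a
      obtain ⟨d, -, hd1, hd2⟩ := p.exists_boundary_dart {u} rfl (fun h => hne h.symm)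
      exact ⟨d.snd, hd1 ▸ d.adj⟩
    have heq := hf.2 u hne
    have hlb : (G.degree u : ℝ) * f u ≤ ∑ y ∈ G.neighborFinset u, f y := by
      have hterm : ∀ y ∈ G.neighborFinset u, f u ≤ f y := by
        intro y hy
        obtain ⟨j, rfl⟩ := hx.surjective y
        exact hmin j
      have := Finset.card_nsmul_le_sum (G.neighborFinset u) f (f u) hterm
      rw [nsmul_eq_mul] at this
      exact this
    have : (0:ℝ) < G.degree u := by exact_mod_cast hdeg
    linarith
  have hfa : f (x ⟨0, h0⟩) = 0 := by rw [hxa, hf.1]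
  -- telescoping
  have tele : ∀ K L : ℕ, K ≤ L → ∀ hL : L < n, ∀ hK : K < n,
      f (x ⟨L, hL⟩) ≤ f (x ⟨K, hK⟩) + (((m : ℝ) - K) ^ 2 - ((m : ℝ) - L) ^ 2) := by
    intro K L hKL
    induction L, hKL using Nat.le_induction with
    | base => intro hL hK; simp
    | succ L hKL ih =>
      intro hL hK
      have hLn : L < n := Nat.lt_of_succ_lt hL
      have hgap := (cut_bound G hconn m hm a f hf x hx hmono h0 hxa (L + 1)
        (Nat.le_add_left 1 L) hL).1
      have hkm := (cut_bound G hconn m hm a f hf x hx hmono h0 hxa (L + 1)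
        (Nat.le_add_left 1 L) hL).2.1
      have hsub : L + 1 - 1 = L := rfl
      have hih := ih hLn hK
      have hx1 : x ⟨L + 1 - 1, Nat.lt_of_le_of_lt (Nat.sub_le (L+1) 1) hL⟩ = x ⟨L, hLn⟩ := by
        congr 1
      rw [hx1] at hgap
      have hc : ((L + 1 : ℕ) : ℝ) = (L : ℝ) + 1 := by push_cast; ring
      rw [hc] at hgap
      nlinarith [hgap, hih]
  -- part (i)
  have hlast : n - 1 < n := Nat.sub_lt h0 one_pos
  have hbound : ∀ v, f v ≤ (m : ℝ) ^ 2 - ((m : ℝ) - ((n - 1 : ℕ) : ℝ)) ^ 2 := by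
    intro v
    obtain ⟨j, rfl⟩ := hx.surjective v
    have h1 : f (x j) ≤ f (x ⟨n - 1, hlast⟩) := by
      apply hmono
      rw [Fin.le_def]
      simp only [Fin.val_mk]
      omega
    have h2 := tele 0 (n - 1) (Nat.zero_le _) hlast h0
    rw [hfa] at h2
    push_cast at h2
    linarith
  have part1 : ∀ v, f v ≤ (m : ℝ) ^ 2 := fun v =>
    le_trans (hbound v) (by nlinarith [sq_nonneg ((m : ℝ) - ((n - 1 : ℕ) : ℝ))])
  refine ⟨part1, ?_⟩
  intro v hv
  have hnm : n = m + 1 := by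
    have h1 := hbound v
    rw [hv] at h1
    have h3 : (m : ℝ) = ((n - 1 : ℕ) : ℝ) := by
      nlinarith [sq_nonneg ((m : ℝ) - ((n - 1 : ℕ) : ℝ))]
    have h4 : m = n - 1 := by exact_mod_cast h3
    omega
  have h8 : ((n - 1 : ℕ) : ℝ) = (m : ℝ) := by rw [hnm]; simp
  have hlastval : f (x ⟨n - 1, hlast⟩) = (m : ℝ) ^ 2 := by
    have h6 : f v ≤ f (x ⟨n - 1, hlast⟩) := by
      obtain ⟨j, rfl⟩ := hx.surjective v
      apply hmono
      rw [Fin.le_def]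
      simp only [Fin.val_mk]
      omega
    have h7 := hbound (x ⟨n - 1, hlast⟩)
    rw [h8] at h7
    have h9 : ((m : ℝ) - (m : ℝ)) ^ 2 = 0 := by ring
    rw [hv] at h6
    linarith
  have hval : ∀ K : ℕ, ∀ hK : K < n, f (x ⟨K, hK⟩) = (m : ℝ) ^ 2 - ((m : ℝ) - K) ^ 2 := by
    intro K hK
    have hle := tele 0 K (Nat.zero_le _) hK h0
    rw [hfa] at hle
    push_cast at hle
    have hge : (m : ℝ) ^ 2 - ((m : ℝ) - K) ^ 2 ≤ f (x ⟨K, hK⟩) := by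
      have h2 := tele K (n - 1) (by omega) hlast hK
      rw [h8, hlastval] at h2
      have h9 : ((m : ℝ) - (m : ℝ)) ^ 2 = 0 := by ring
      linarith
    linarith
  have hvalfin : ∀ i : Fin n, f (x i) = (m : ℝ) ^ 2 - ((m : ℝ) - i.val) ^ 2 := by
    intro i
    have := hval i.val i.isLt
    simpa only [Fin.eta] using this
  have hcastle : ∀ i : Fin n, (i.val : ℝ) ≤ (m : ℝ) := by
    intro i
    have h1 := i.isLt
    have h2 : i.val ≤ m := by omega
    exact_mod_cast h2
  have hinj : Function.Injective (f ∘ x) := by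
    intro i j hij
    simp only [Function.comp_apply] at hij
    rw [hvalfin i, hvalfin j] at hij
    have h2 : ((m : ℝ) - i.val) ^ 2 = ((m : ℝ) - j.val) ^ 2 := by linarith
    have hi := hcastle i
    have hj := hcastle j
    have h3 : (i.val : ℝ) = (j.val : ℝ) :=
      le_antisymm (by nlinarith) (by nlinarith)
    exact Fin.ext (by exact_mod_cast h3)
  have hgapeq : ∀ k : ℕ, 1 ≤ k → ∀ hkn : k < n,
      f (x ⟨k, hkn⟩) - f (x ⟨k - 1, Nat.lt_of_le_of_lt (Nat.sub_le k 1) hkn⟩)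
        = 2 * ((m : ℝ) - k) + 1 := by
    intro k hk1 hkn
    rw [hval k hkn, hval (k - 1) (Nat.lt_of_le_of_lt (Nat.sub_le k 1) hkn)]
    have hc : ((k - 1 : ℕ) : ℝ) = (k : ℝ) - 1 := by
      have h1 : (1 : ℕ) ≤ k := hk1
      push_cast [h1]
      ring
    rw [hc]
    ring
  have hcut : ∀ k (hk1 : 1 ≤ k) (hkn : k < n),
      cutP G (sortB x k)
        = {(x ⟨k, hkn⟩, x ⟨k - 1, Nat.lt_of_le_of_lt (Nat.sub_le k 1) hkn⟩)} :=
    fun k hk1 hkn =>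
      (cut_bound G hconn m hm a f hf x hx hmono h0 hxa k hk1 hkn).2.2
        (hgapeq k hk1 hkn) hinj
  -- adjacency characterization
  have hadj : ∀ i j : Fin n, G.Adj (x i) (x j) ↔ (i.val + 1 = j.val ∨ j.val + 1 = i.val) := by
    have hfwd : ∀ i j : Fin n, j.val < i.val → G.Adj (x i) (x j) → j.val + 1 = i.val := by
      intro i j hlt hA
      set k := j.val + 1 with hk
      have hkn : k < n := by omega
      have hmem : (x i, x j) ∈ cutP G (sortB x k) := by
        simp only [cutP, adjP, Finset.filter_filter, Finset.mem_filter, Finset.mem_univ,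
          true_and]
        refine ⟨hA, (sortB_mem hx k i).2 (by omega), fun hc => ?_⟩
        rw [sortB_mem hx] at hc
        omega
      rw [hcut k (by omega) hkn] at hmem
      have h1 : x i = x ⟨k, hkn⟩ := congrArg Prod.fst (Finset.mem_singleton.1 hmem)
      have h2 := hx.injective h1
      have : i.val = k := by rw [h2]
      omega
    have hbwd : ∀ i j : Fin n, j.val + 1 = i.val → G.Adj (x i) (x j) := by
      intro i j hji
      set k := i.val with hk
      have hkn : k < n := i.isLt
      have hk1 : 1 ≤ k := by omega
      have hmem : (x ⟨k, hkn⟩, x ⟨k - 1, Nat.lt_of_le_of_lt (Nat.sub_le k 1) hkn⟩)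
          ∈ cutP G (sortB x k) := by
        rw [hcut k hk1 hkn]
        exact Finset.mem_singleton_self _
      simp only [cutP, adjP, Finset.filter_filter, Finset.mem_filter, Finset.mem_univ,
        true_and] at hmem
      have hA := hmem.1
      have hieq : (⟨k, hkn⟩ : Fin n) = i := Fin.ext rfl
      have hjeq : (⟨k - 1, Nat.lt_of_le_of_lt (Nat.sub_le k 1) hkn⟩ : Fin n) = j :=
        Fin.ext (by simp only [Fin.val_mk]; omega)
      rwa [hieq, hjeq] at hA
    intro i j
    constructor
    · intro hA
      have hij : i.val ≠ j.val := fun h => G.irrefl ((Fin.ext h : i = j) ▸ hA)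
      rcases Nat.lt_or_ge j.val i.val with hlt | hge
      · exact Or.inr (hfwd i j hlt hA)
      · exact Or.inl (hfwd j i (by omega) hA.symm)
    · rintro (h | h)
      · exact (hbwd j i h).symm
      · exact hbwd i j h
  -- build the isomorphism
  refine ⟨⟨(Equiv.ofBijective x hx).symm.trans (finCongr hnm), ?_⟩⟩
  intro u v
  obtain ⟨i, rfl⟩ := hx.surjective u
  obtain ⟨j, rfl⟩ := hx.surjective v
  have hsymm : ∀ i : Fin n, (Equiv.ofBijective x hx).symm (x i) = i := fun i =>
    (Equiv.ofBijective x hx).injective (by simp)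
  simp only [Equiv.trans_apply, hsymm]
  rw [SimpleGraph.pathGraph_adj]
  simp only [finCongr_apply_coe]
  exact (hadj i j).symm

lemma path_case (m : ℕ) (eiso : G ≃g SimpleGraph.pathGraph (m + 1)) :
    ∃ (a : V) (H : V → ℝ) (x0 : V), IsHittingTime G a H ∧ H x0 = (m : ℝ) ^ 2 := by
  classical
  set φ : V ≃ Fin (m + 1) := eiso.toEquiv with hφ
  set Hf : V → ℝ := fun v => ((φ v).val : ℝ) * (2 * (m : ℝ) - ((φ v).val : ℝ)) with hHf
  have hAdj : ∀ v u : V, G.Adj v u ↔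
      ((φ v).val + 1 = (φ u).val ∨ (φ u).val + 1 = (φ v).val) := by
    intro v u
    rw [← eiso.map_rel_iff, SimpleGraph.pathGraph_adj]
    rfl
  refine ⟨φ.symm 0, Hf, φ.symm ⟨m, Nat.lt_succ_self m⟩, ⟨?_, ?_⟩, ?_⟩
  · simp [hHf]
  · intro v hva
    set i := φ v with hi
    have hine : i ≠ 0 := by
      intro h
      apply hva
      rw [← Equiv.symm_apply_apply φ v, ← hi, h]
    have hival : 1 ≤ i.val := Nat.pos_of_ne_zero fun h => hine (Fin.ext h)
    have hile : i.val ≤ m := Nat.lt_succ_iff.1 i.isLt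
    by_cases him : i.val = m
    · -- endpoint
      have hnbr : G.neighborFinset v = {φ.symm ⟨m - 1, by omega⟩} := by
        ext u
        rw [SimpleGraph.mem_neighborFinset, G.adj_comm, hAdj u v, Finset.mem_singleton]
        constructor
        · rintro (h | h)
          · apply (Equiv.eq_symm_apply φ).2
            apply Fin.ext
            simp only [Fin.val_mk]
            all_goals omega
          · exfalso
            have := (φ u).isLt
            omega
        · intro h
          left
          rw [h]
          simp only [Equiv.apply_symm_apply, Fin.val_mk]
          all_goals omega
      have hdeg : G.degree v = 1 := by rw [SimpleGraph.degree, hnbr, Finset.card_singleton]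
      rw [hdeg, hnbr, Finset.sum_singleton]
      have h1m : 1 ≤ m := by omega
      simp only [hHf, Equiv.apply_symm_apply, Fin.val_mk, ← hi, him]
      rw [Nat.cast_sub h1m]
      push_cast
      ring
    · -- interior vertex
      have hilt : i.val < m := by omega
      have hnbr : G.neighborFinset v
          = {φ.symm ⟨i.val - 1, by omega⟩, φ.symm ⟨i.val + 1, by omega⟩} := by
        ext u
        rw [SimpleGraph.mem_neighborFinset, G.adj_comm, hAdj u v, Finset.mem_insert,
          Finset.mem_singleton]
        constructor
        · rintro (h | h)
          · left
            apply (Equiv.eq_symm_apply φ).2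
            apply Fin.ext
            simp only [Fin.val_mk]
            all_goals omega
          · right
            apply (Equiv.eq_symm_apply φ).2
            apply Fin.ext
            simp only [Fin.val_mk]
            all_goals omega
        · rintro (h | h)
          · left
            rw [h]
            simp only [Equiv.apply_symm_apply, Fin.val_mk]
            all_goals omega
          · right
            rw [h]
            simp only [Equiv.apply_symm_apply, Fin.val_mk]
            all_goals omega
      have hne2 : φ.symm ⟨i.val - 1, by omega⟩ ≠ φ.symm ⟨i.val + 1, by omega⟩ := by
        intro h
        have := φ.symm.injective h
        have := congrArg Fin.val this
        simp only [Fin.val_mk] at this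
        omega
      have hdeg : G.degree v = 2 := by
        rw [SimpleGraph.degree, hnbr, Finset.card_insert_of_notMem
          (by simpa using hne2), Finset.card_singleton]
      rw [hdeg, hnbr, Finset.sum_insert (by simpa using hne2), Finset.sum_singleton]
      simp only [hHf, Equiv.apply_symm_apply, Fin.val_mk, ← hi]
      rw [Nat.cast_sub hival]
      push_cast
      ring
  · simp only [hHf, Equiv.apply_symm_apply, Fin.val_mk]
    push_cast
    ring
end Aux

/-- For a simple random walk on a finite connected graph `G` with `m` edges, the maximum
hitting time satisfies `H(G) ≤ m²`, with equality attained if and only if `G` is the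
path graph `P_m`. -/
theorem max_hitting_time_le_sq_iff_path {V : Type*} [Fintype V] [DecidableEq V]
    (G : SimpleGraph V) [DecidableRel G.Adj] (hconn : G.Connected)
    (m : ℕ) (hm : m = G.edgeFinset.card) :
    (∀ (a : V) (H : V → ℝ), IsHittingTime G a H → ∀ x, H x ≤ (m : ℝ) ^ 2) ∧
    ((∃ (a : V) (H : V → ℝ) (x : V), IsHittingTime G a H ∧ H x = (m : ℝ) ^ 2) ↔
      Nonempty (G ≃g SimpleGraph.pathGraph (m + 1))) := by
  refine ⟨fun a H hf x => (master G hconn m hm a H hf).1 x, ?_, ?_⟩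
  · rintro ⟨a, H, x, hf, hx⟩
    exact (master G hconn m hm a H hf).2 x hx
  · rintro ⟨eiso⟩
    obtain ⟨a, H, x0, hf, hx⟩ := path_case G m eiso
    exact ⟨a, H, x0, hf, hx⟩
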